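/- Let E be a Banach f-algebra and (x_α) a net in E. If x_α →mw x, then |x_α| →mw |x|. -/
import Mathlib


open Filter Topology

section PosPartFunctional

variable {E : Type*} [NormedAddCommGroup E] [Lattice E]
  [CovariantClass E E (· + ·) (· ≤ ·)] [NormedSpace ℝ E]

/-- The value of the positive part of `f` at `x` (for `x ≥ 0`). -/
noncomputable def pPos (f : E →L[ℝ] ℝ) (x : E) : ℝ :=
  sSup (f '' {y | 0 ≤ y ∧ y ≤ x})

variable (hsolid : ∀ a b : E, |a| ≤ |b| → ‖a‖ ≤ ‖b‖) (f : E →L[ℝ] ℝ)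

include hsolid

theorem pPos_bddAbove (x : E) : BddAbove (f '' {y | 0 ≤ y ∧ y ≤ x}) := by
  refine ⟨‖f‖ * ‖x‖, ?_⟩
  rintro r ⟨y, ⟨hy0, hyx⟩, rfl⟩
  have hny : ‖y‖ ≤ ‖x‖ := hsolid y x (by
    rw [abs_of_nonneg hy0]
    exact hyx.trans (le_abs_self x))
  calc f y ≤ |f y| := le_abs_self _
    _ ≤ ‖f‖ * ‖y‖ := f.le_opNorm y
    _ ≤ ‖f‖ * ‖x‖ := by gcongr

theorem le_pPos {y x : E} (hy0 : 0 ≤ y) (hyx : y ≤ x) : f y ≤ pPos f x :=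
  le_csSup (pPos_bddAbove hsolid f x) ⟨y, ⟨hy0, hyx⟩, rfl⟩

theorem pPos_nonneg {x : E} (hx : 0 ≤ x) : 0 ≤ pPos f x := by
  simpa using le_pPos hsolid f le_rfl hx

theorem pPos_le {x : E} (hx : 0 ≤ x) : pPos f x ≤ ‖f‖ * ‖x‖ := by
  refine csSup_le ⟨f 0, 0, ⟨le_rfl, hx⟩, rfl⟩ ?_
  rintro r ⟨y, ⟨hy0, hyx⟩, rfl⟩
  have hny : ‖y‖ ≤ ‖x‖ := hsolid y x (by
    rw [abs_of_nonneg hy0]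
    exact hyx.trans (le_abs_self x))
  calc f y ≤ |f y| := le_abs_self _
    _ ≤ ‖f‖ * ‖y‖ := f.le_opNorm y
    _ ≤ ‖f‖ * ‖x‖ := by gcongr

theorem pPos_zero : pPos f 0 = 0 := by
  refine le_antisymm ?_ (pPos_nonneg hsolid f le_rfl)
  refine csSup_le ⟨f 0, 0, ⟨le_rfl, le_rfl⟩, rfl⟩ ?_
  rintro r ⟨y, ⟨hy0, hyx⟩, rfl⟩
  rw [le_antisymm hyx hy0]
  simp

theorem pPos_add {x y : E} (hx : 0 ≤ x) (hy : 0 ≤ y) :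
    pPos f (x + y) = pPos f x + pPos f y := by
  refine le_antisymm ?_ ?_
  · refine csSup_le ⟨f 0, 0, ⟨le_rfl, add_nonneg hx hy⟩, rfl⟩ ?_
    rintro r ⟨z, ⟨hz0, hzxy⟩, rfl⟩
    have h1 : (0:E) ≤ z ⊓ x := le_inf hz0 hx
    have h2 : z ⊓ x ≤ x := inf_le_right
    have h3 : (0:E) ≤ z - z ⊓ x := sub_nonneg.2 inf_le_left
    have h4 : z - z ⊓ x ≤ y := by
      rw [sub_le_comm]
      exact le_inf (sub_le_self z hy) (sub_le_iff_le_add.2 hzxy)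
    have hsplit : f z = f (z ⊓ x) + f (z - z ⊓ x) := by
      rw [← map_add]; congr 1; abel
    rw [hsplit]
    exact add_le_add (le_pPos hsolid f h1 h2) (le_pPos hsolid f h3 h4)
  · rw [← le_sub_iff_add_le]
    refine csSup_le ⟨f 0, 0, ⟨le_rfl, hx⟩, rfl⟩ ?_
    rintro r ⟨w, ⟨hw0, hwx⟩, rfl⟩
    rw [le_sub_iff_add_le, add_comm, ← le_sub_iff_add_le]
    refine csSup_le ⟨f 0, 0, ⟨le_rfl, hy⟩, rfl⟩ ?_
    rintro s ⟨z, ⟨hz0, hzy⟩, rfl⟩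
    rw [le_sub_iff_add_le, ← map_add]
    exact le_pPos hsolid f (add_nonneg hz0 hw0) ((add_le_add hzy hwx).trans (add_comm y x).le)

/-- The positive part of `f` as a plain function. -/
noncomputable def fPos (f : E →L[ℝ] ℝ) (x : E) : ℝ :=
  pPos f x⁺ - pPos f x⁻

theorem fPos_eq {u v : E} (hu : 0 ≤ u) (hv : 0 ≤ v) :
    fPos f (u - v) = pPos f u - pPos f v := by
  set w := u - v with hw
  have hkey : w⁺ + v = w⁻ + u := by
    have h1 : w⁺ - w⁻ = u - v := posPart_sub_negPart w
    rw [sub_eq_sub_iff_add_eq_add] at h1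
    rw [h1]; abel
  have h2 : pPos f (w⁺ + v) = pPos f w⁺ + pPos f v :=
    pPos_add hsolid f (posPart_nonneg w) hv
  have h3 : pPos f (w⁻ + u) = pPos f w⁻ + pPos f u :=
    pPos_add hsolid f (negPart_nonneg w) hu
  have := h2.symm.trans (by rw [hkey, h3])
  unfold fPos
  linarith

theorem fPos_of_nonneg {x : E} (hx : 0 ≤ x) : fPos f x = pPos f x := by
  have := fPos_eq hsolid f hx (le_refl (0:E))
  rw [sub_zero, pPos_zero hsolid] at this
  linarith

theorem fPos_add (x y : E) : fPos f (x + y) = fPos f x + fPos f y := by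
  have hxy : x + y = (x⁺ + y⁺) - (x⁻ + y⁻) := by
    rw [show (x⁺ + y⁺) - (x⁻ + y⁻) = (x⁺ - x⁻) + (y⁺ - y⁻) by abel,
      posPart_sub_negPart, posPart_sub_negPart]
  rw [hxy, fPos_eq hsolid f (add_nonneg (posPart_nonneg x) (posPart_nonneg y))
    (add_nonneg (negPart_nonneg x) (negPart_nonneg y)),
    pPos_add hsolid f (posPart_nonneg x) (posPart_nonneg y),
    pPos_add hsolid f (negPart_nonneg x) (negPart_nonneg y)]
  unfold fPos
  ring

theorem norm_fPos_le (x : E) : ‖fPos f x‖ ≤ ‖f‖ * ‖x‖ := by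
  have hxp : ‖x⁺‖ ≤ ‖x‖ := by
    refine hsolid _ _ ?_
    rw [abs_of_nonneg (posPart_nonneg x)]
    calc x⁺ ≤ x⁺ + x⁻ := le_add_of_nonneg_right (negPart_nonneg x)
      _ = |x| := posPart_add_negPart x
  have hxn : ‖x⁻‖ ≤ ‖x‖ := by
    refine hsolid _ _ ?_
    rw [abs_of_nonneg (negPart_nonneg x)]
    calc x⁻ ≤ x⁺ + x⁻ := le_add_of_nonneg_left (posPart_nonneg x)
      _ = |x| := posPart_add_negPart x
  have h1 : pPos f x⁺ ≤ ‖f‖ * ‖x‖ := by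
    calc pPos f x⁺ ≤ ‖f‖ * ‖x⁺‖ := pPos_le hsolid f (posPart_nonneg x)
      _ ≤ ‖f‖ * ‖x‖ := mul_le_mul_of_nonneg_left hxp (norm_nonneg f)
  have h2 : pPos f x⁻ ≤ ‖f‖ * ‖x‖ := by
    calc pPos f x⁻ ≤ ‖f‖ * ‖x⁻‖ := pPos_le hsolid f (negPart_nonneg x)
      _ ≤ ‖f‖ * ‖x‖ := mul_le_mul_of_nonneg_left hxn (norm_nonneg f)
  have h3 : 0 ≤ pPos f x⁺ := pPos_nonneg hsolid f (posPart_nonneg x)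
  have h4 : 0 ≤ pPos f x⁻ := pPos_nonneg hsolid f (negPart_nonneg x)
  rw [Real.norm_eq_abs]
  unfold fPos
  rw [abs_le]
  constructor <;> linarith

/-- The positive part of a continuous linear functional on a Banach lattice. -/
noncomputable def posPartCLM : E →L[ℝ] ℝ :=
  (AddMonoidHom.mk' (fPos f) (fPos_add hsolid f)).toRealLinearMap <| by
    have : LipschitzWith ‖f‖₊ (fPos f) := by
      refine LipschitzWith.of_dist_le_mul fun a b => ?_
      have hsub : fPos f a - fPos f b = fPos f (a - b) := by
        have := fPos_add hsolid f (a - b) b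
        rw [sub_add_cancel] at this
        linarith
      rw [Real.dist_eq, hsub, dist_eq_norm, ← Real.norm_eq_abs]
      exact norm_fPos_le hsolid f (a - b)
    exact this.continuous

theorem posPartCLM_apply (x : E) : posPartCLM hsolid f x = fPos f x := rfl

theorem le_posPartCLM {x : E} (hx : 0 ≤ x) : f x ≤ posPartCLM hsolid f x := by
  rw [posPartCLM_apply, fPos_of_nonneg hsolid f hx]
  exact le_pPos hsolid f hx le_rfl

theorem posPartCLM_nonneg {x : E} (hx : 0 ≤ x) : 0 ≤ posPartCLM hsolid f x := by
  rw [posPartCLM_apply, fPos_of_nonneg hsolid f hx]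
  exact pPos_nonneg hsolid f hx

end PosPartFunctional

/-- A net `x : ι → E` (along a filter `l`) in a Banach `f`-algebra is *multiplicative weak
convergent* (`mw`-convergent) to `a` if `|x i - a| * u` converges weakly to `0` for every
`u ≥ 0`, i.e. `f (|x i - a| * u) → 0` for every continuous linear functional `f` on `E`. -/
def MWTendsto {E : Type*} [NonUnitalNormedCommRing E] [Lattice E] [NormedSpace ℝ E]
    {ι : Type*} (l : Filter ι) (x : ι → E) (a : E) : Prop :=
  ∀ u : E, 0 ≤ u → ∀ f : E →L[ℝ] ℝ, Tendsto (fun i => f (|x i - a| * u)) l (𝓝 0)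

/-- If `x_α →mw x` then `|x_α| →mw |x|`. -/
theorem mw_abs
    {E : Type*} [NonUnitalNormedCommRing E] [Lattice E]
    [CovariantClass E E (· + ·) (· ≤ ·)] [NormedSpace ℝ E] [CompleteSpace E]
    (hsolid : ∀ a b : E, |a| ≤ |b| → ‖a‖ ≤ ‖b‖)
    (hmulpos : ∀ a b : E, 0 ≤ a → 0 ≤ b → 0 ≤ a * b)
    (hfalg : ∀ a b c : E, a ⊓ b = 0 → 0 ≤ c → (a * c) ⊓ b = 0)
    {A : Type*} [Nonempty A] [SemilatticeSup A]
    (x : A → E) (a : E) (hx : MWTendsto atTop x a) :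
    MWTendsto atTop (fun α => |x α|) |a| := by
  intro u hu f
  set F : E →L[ℝ] ℝ := posPartCLM hsolid f with hF
  set y : A → E := fun α => |x α - a| * u with hy
  set z : A → E := fun α => |(|x α| - |a|)| * u with hz
  -- basic positivity facts
  have hy0 : ∀ α, 0 ≤ y α := fun α => hmulpos _ _ (abs_nonneg _) hu
  have hz0 : ∀ α, 0 ≤ z α := fun α => hmulpos _ _ (abs_nonneg _) hu
  have hzy : ∀ α, z α ≤ y α := by
    intro α
    have habs : |(|x α| - |a|)| ≤ |x α - a| := abs_abs_sub_abs_le (x α) a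
    have h := hmulpos _ _ (sub_nonneg.2 habs) hu
    rw [sub_mul] at h
    exact sub_nonneg.1 h
  -- pointwise bound: |f (z α)| ≤ F (y α) + |f (y α)|
  have hbound : ∀ α, ‖f (z α)‖ ≤ F (y α) + |f (y α)| := by
    intro α
    have hFy0 : 0 ≤ F (y α) := posPartCLM_nonneg hsolid f (hy0 α)
    have hFz0 : 0 ≤ F (z α) := posPartCLM_nonneg hsolid f (hz0 α)
    have hfz : f (z α) ≤ F (z α) := le_posPartCLM hsolid f (hz0 α)
    have hFmono : F (z α) ≤ F (y α) := by
      have h1 : 0 ≤ F (y α - z α) :=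
        posPartCLM_nonneg hsolid f (sub_nonneg.2 (hzy α))
      rw [map_sub] at h1
      linarith
    have hdiff : f (y α - z α) ≤ F (y α - z α) :=
      le_posPartCLM hsolid f (sub_nonneg.2 (hzy α))
    rw [map_sub, map_sub] at hdiff
    have hfy : -|f (y α)| ≤ f (y α) := neg_abs_le _
    have hfy2 : (0:ℝ) ≤ |f (y α)| := abs_nonneg _
    rw [Real.norm_eq_abs, abs_le]
    constructor <;> linarith
  -- the bound tends to zero
  have htend : Tendsto (fun α => F (y α) + |f (y α)|) atTop (𝓝 0) := by
    have h1 : Tendsto (fun α => F (y α)) atTop (𝓝 0) := hx u hu F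
    have h2 : Tendsto (fun α => |f (y α)|) atTop (𝓝 0) := by
      simpa using (hx u hu f).abs
    simpa using h1.add h2
  exact squeeze_zero_norm hbound htend
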